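/- For every natural number p, the Fibonacci sequence in R satisfies F_{n+p} = F_n for all n if and only if A^p = 1, where A is the 2×2 matrix [[0, 1], [1, 1]] over R. -/
import Mathlib


/-- The Fibonacci sequence in a commutative ring `R`. -/
def fibR (R : Type*) [CommRing R] : ℕ → R
  | 0 => 0
  | 1 => 1
  | (n + 2) => fibR R n + fibR R (n + 1)

lemma fibA_pow {R : Type*} [CommRing R] (n : ℕ) :
    (!![0, 1; 1, 1] : Matrix (Fin 2) (Fin 2) R) ^ n =
      !![fibR R (n+1) - fibR R n, fibR R n; fibR R n, fibR R (n+1)] := by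
  induction n with
  | zero =>
    show (1 : Matrix (Fin 2) (Fin 2) R) = _
    rw [Matrix.one_fin_two]
    norm_num [fibR]
  | succ n ih =>
    rw [pow_succ, ih]
    have h2 : fibR R (n + 2) = fibR R n + fibR R (n + 1) := rfl
    rw [show n + 1 + 1 = n + 2 from rfl, h2]
    ext i j
    fin_cases i <;> fin_cases j <;>
      simp [Matrix.mul_apply, Fin.sum_univ_two] <;> ring

theorem fib_period_iff_matrix_pow_eq_one {R : Type*} [CommRing R] (h1 : (1 : R) ≠ 0)
    (p : ℕ) :
    (∀ n : ℕ, fibR R (n + p) = fibR R n) ↔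
    (!![0, 1; 1, 1] : Matrix (Fin 2) (Fin 2) R) ^ p = 1 := by
  constructor
  · intro h
    have h0 : fibR R p = 0 := by simpa [fibR] using h 0
    have hp1 : fibR R (p + 1) = 1 := by
      have := h 1
      rw [Nat.add_comm 1 p] at this
      simpa [fibR] using this
    rw [fibA_pow, h0, hp1]
    ext i j
    fin_cases i <;> fin_cases j <;> simp [Matrix.one_apply]
  · intro hA n
    have key : (!![0, 1; 1, 1] : Matrix (Fin 2) (Fin 2) R) ^ (n + p) =
        (!![0, 1; 1, 1] : Matrix (Fin 2) (Fin 2) R) ^ n := by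
      rw [pow_add, hA, mul_one]
    rw [fibA_pow, fibA_pow] at key
    have := congrFun (congrFun key 0) 1
    simpa using this
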